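/- arXiv:1108.3102 — 6 statements merged into one kernel-verified Lean document; each statement's English description precedes it below -/
import Mathlib

section
/- Let a, b, c be integers. If the matrices [[a, b],[b+1, 0]] and [[c, b],[b+1, 0]] are congruent over ℤ, then there exists an integer n such that a + n·(2b+1) = c. -/
open Matrix

/-- Two `n × n` integer matrices `V` and `W` are congruent over `ℤ` if there is an
integer matrix `P` with `det P = ±1` such that `P * V * Pᵀ = W`. -/
def IntCongruent {n : ℕ} (V W : Matrix (Fin n) (Fin n) ℤ) : Prop :=
  ∃ P : Matrix (Fin n) (Fin n) ℤ, (P.det = 1 ∨ P.det = -1) ∧ P * V * Pᵀ = W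

theorem stmt_1 (a b c : ℤ)
    (h : IntCongruent !![a, b; b + 1, 0] !![c, b; b + 1, 0]) :
    ∃ n : ℤ, a + n * (2 * b + 1) = c := by
  obtain ⟨P, hdet, hP⟩ := h
  set p := P 0 0 with hp
  set q := P 0 1 with hq
  set r := P 1 0 with hr
  set s := P 1 1 with hs
  have h11 := congrFun (congrFun hP 0) 0
  have h12 := congrFun (congrFun hP 0) 1
  have h21 := congrFun (congrFun hP 1) 0
  have h22 := congrFun (congrFun hP 1) 1
  simp [Matrix.mul_apply, Fin.sum_univ_two, Matrix.transpose_apply, ← hp, ← hq, ← hr, ← hs] at h11 h12 h21 h22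
  have hps : p * s - q * r = 1 := by linear_combination h21 - h12
  have h0 : p * r * a + q * r * (2 * b + 1) = 0 := by linear_combination h12 - b * hps
  have hr0 : r * (2 * b + 1) = 0 := by
    linear_combination p * h22 - r * h0 - r * (2 * b + 1) * hps
  have hrz : r = 0 := by
    rcases mul_eq_zero.mp hr0 with h' | h'
    · exact h'
    · omega
  have hps1 : p * s = 1 := by rw [hrz] at hps; linarith
  have hpp : p * p = 1 := by
    rcases Int.mul_eq_one_iff_eq_one_or_neg_one.mp hps1 with ⟨h1, _⟩ | ⟨h1, _⟩ <;> rw [h1] <;> norm_num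
  exact ⟨p * q, by linear_combination h11 - a * hpp⟩
end

section
/- For all integers a, b, the 2×2 integer matrices [[a, b],[b+1, 0]] and [[a·b², b],[b+1, 0]] are S-equivalent. -/
open Matrix

set_option maxHeartbeats 2000000

/-- The column expansion of an `n × n` integer matrix `V` by a vector `u`:
the `(n+2) × (n+2)` matrix whose top-left `n × n` block is `V`, whose `(n+1)`-st row is
`(u 0, …, u (n-1), 0, 0)`, whose `(n+2)`-nd row is `(0, …, 0, 1, 0)`, and whose
remaining entries are `0`. -/
def colExpand {n : ℕ} (V : Matrix (Fin n) (Fin n) ℤ) (u : Fin n → ℤ) :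
    Matrix (Fin (n + 2)) (Fin (n + 2)) ℤ :=
  Matrix.of fun i j =>
    if hi : (i : ℕ) < n then
      if hj : (j : ℕ) < n then V ⟨i, hi⟩ ⟨j, hj⟩ else 0
    else if (i : ℕ) = n then
      if hj : (j : ℕ) < n then u ⟨j, hj⟩ else 0
    else
      if (j : ℕ) = n then 1 else 0

/-- The elementary moves of S-equivalence: unimodular congruence, column expansion
and row expansion (a row expansion of `V` is the transpose of a column expansion
of `Vᵀ`). -/
inductive SMove :
    (Σ n, Matrix (Fin n) (Fin n) ℤ) → (Σ n, Matrix (Fin n) (Fin n) ℤ) → Prop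
  | congruence {n : ℕ} (V P : Matrix (Fin n) (Fin n) ℤ) (hP : P.det = 1 ∨ P.det = -1) :
      SMove ⟨n, V⟩ ⟨n, P * V * Pᵀ⟩
  | colExp {n : ℕ} (V : Matrix (Fin n) (Fin n) ℤ) (u : Fin n → ℤ) :
      SMove ⟨n, V⟩ ⟨n + 2, colExpand V u⟩
  | rowExp {n : ℕ} (V : Matrix (Fin n) (Fin n) ℤ) (u : Fin n → ℤ) :
      SMove ⟨n, V⟩ ⟨n + 2, (colExpand Vᵀ u)ᵀ⟩

/-- Two square integer matrices are S-equivalent if they are related by a finite sequence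
of elementary moves and their inverses. -/
def SEquivalent {m n : ℕ} (V : Matrix (Fin m) (Fin m) ℤ) (W : Matrix (Fin n) (Fin n) ℤ) :
    Prop :=
  Relation.EqvGen SMove ⟨m, V⟩ ⟨n, W⟩

/-- Column expansion of an explicit `2 × 2` matrix. -/
lemma colExpand_ex (p q r s u1 u2 : ℤ) :
    colExpand !![p, q; r, s] ![u1, u2] =
      !![p, q, 0, 0; r, s, 0, 0; u1, u2, 0, 0; 0, 0, 1, 0] := by
  ext i j
  fin_cases i <;> fin_cases j <;> rfl

/-- Row expansion of an explicit `2 × 2` matrix. -/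
lemma rowExpand_ex (p q r s u1 u2 : ℤ) :
    (colExpand (!![p, q; r, s])ᵀ ![u1, u2])ᵀ =
      !![p, q, u1, 0; r, s, u2, 0; 0, 0, 0, 1; 0, 0, 0, 0] := by
  ext i j
  fin_cases i <;> fin_cases j <;> rfl

/-- A `2 × 2` congruence realizing a shift of the upper-left entry by a multiple
of `2*b+1`. -/
lemma shear_congr (x b k : ℤ) :
    !![1, k; 0, 1] * !![x, b; b + 1, 0] * (!![1, k; 0, 1])ᵀ =
      !![x + k * (2 * b + 1), b; b + 1, 0] := by
  ext i j
  fin_cases i <;> fin_cases j <;>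
    simp [Matrix.mul_apply, Fin.sum_univ_two, Matrix.vecHead, Matrix.vecTail] <;> ring

lemma shear_det (k : ℤ) : (!![1, k; 0, 1] : Matrix (Fin 2) (Fin 2) ℤ).det = 1 := by
  simp [Matrix.det_fin_two]

/-- The key one-stabilization move, odd case: for `b = 2c+1`,
`[[x, b],[b+1,0]]` is S-equivalent to `[[4x, b],[b+1,0]]` after undoing the
shift `4x ≡ a (mod 2b+1)` for `x = a*b^2`. -/
lemma four_times_odd (a c : ℤ) :
    SEquivalent !![a, 2*c+1; 2*c+1 + 1, 0]
      !![a * (2*c+1) ^ 2, 2*c+1; 2*c+1 + 1, 0] := by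
  -- step 1 : column expansion of W
  have h1 : SMove ⟨2, (!![a * (2*c+1) ^ 2, 2*c+1; 2*c+1 + 1, 0] : Matrix (Fin 2) (Fin 2) ℤ)⟩
      ⟨2 + 2, colExpand !![a * (2*c+1) ^ 2, 2*c+1; 2*c+1 + 1, 0] ![-(c+1), 0]⟩ :=
    SMove.colExp _ _
  -- the unimodular congruence matrix
  have hdet : (!![2, -2*(a*(2*c+1)^2), -4*(a*(2*c+1)^2), -(2*c+1); 0, -c, -(2*c+1), 0;
       1, -(a*(2*c+1)^2), -2*(a*(2*c+1)^2), -c; 0, 1, 2, 0] : Matrix (Fin 4) (Fin 4) ℤ).det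
      = 1 ∨ (!![2, -2*(a*(2*c+1)^2), -4*(a*(2*c+1)^2), -(2*c+1); 0, -c, -(2*c+1), 0;
       1, -(a*(2*c+1)^2), -2*(a*(2*c+1)^2), -c; 0, 1, 2, 0] : Matrix (Fin 4) (Fin 4) ℤ).det
      = -1 := by
    right
    simp [Matrix.det_succ_row_zero, Fin.sum_univ_succ, Matrix.vecHead, Matrix.vecTail,
      Fin.succAbove, Fin.castSucc, Fin.castAdd, Fin.castLE]
    ring
  have hK : (!![2, -2*(a*(2*c+1)^2), -4*(a*(2*c+1)^2), -(2*c+1); 0, -c, -(2*c+1), 0;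
       1, -(a*(2*c+1)^2), -2*(a*(2*c+1)^2), -c; 0, 1, 2, 0] : Matrix (Fin 4) (Fin 4) ℤ) *
      colExpand !![a * (2*c+1) ^ 2, 2*c+1; 2*c+1 + 1, 0] ![-(c+1), 0] =
      !![2*a + 8*a*c + 8*a*c^2, 2 + 4*c, -1 - 2*c, 0; 1 + c, 0, 0, 0;
         a + 4*a*c + 4*a*c^2, 1 + 2*c, -c, 0; 0, 0, 0, 0] := by
    rw [colExpand_ex]
    ext i j
    fin_cases i <;> fin_cases j <;>
      simp [Matrix.mul_apply, Fin.sum_univ_four, Matrix.vecHead, Matrix.vecTail] <;> ring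
  have key : (!![2, -2*(a*(2*c+1)^2), -4*(a*(2*c+1)^2), -(2*c+1); 0, -c, -(2*c+1), 0;
       1, -(a*(2*c+1)^2), -2*(a*(2*c+1)^2), -c; 0, 1, 2, 0] : Matrix (Fin 4) (Fin 4) ℤ) *
      colExpand !![a * (2*c+1) ^ 2, 2*c+1; 2*c+1 + 1, 0] ![-(c+1), 0] *
      (!![2, -2*(a*(2*c+1)^2), -4*(a*(2*c+1)^2), -(2*c+1); 0, -c, -(2*c+1), 0;
       1, -(a*(2*c+1)^2), -2*(a*(2*c+1)^2), -c; 0, 1, 2, 0] : Matrix (Fin 4) (Fin 4) ℤ)ᵀ =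
      (colExpand (!![4 * (a * (2*c+1) ^ 2), 2*c+1; 2*c+1 + 1, 0])ᵀ
        ![2 * (a * (2*c+1) ^ 2), c+1])ᵀ := by
    rw [hK, rowExpand_ex]
    ext i j
    fin_cases i <;> fin_cases j <;>
      simp [Matrix.mul_apply, Fin.sum_univ_four, Matrix.vecHead, Matrix.vecTail,
        Matrix.transpose_apply] <;> ring
  have h2 : SMove ⟨2 + 2, colExpand !![a * (2*c+1) ^ 2, 2*c+1; 2*c+1 + 1, 0] ![-(c+1), 0]⟩
      ⟨2 + 2, (colExpand (!![4 * (a * (2*c+1) ^ 2), 2*c+1; 2*c+1 + 1, 0])ᵀ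
        ![2 * (a * (2*c+1) ^ 2), c+1])ᵀ⟩ := by
    have := SMove.congruence
      (colExpand !![a * (2*c+1) ^ 2, 2*c+1; 2*c+1 + 1, 0] ![-(c+1), 0])
      (!![2, -2*(a*(2*c+1)^2), -4*(a*(2*c+1)^2), -(2*c+1); 0, -c, -(2*c+1), 0;
       1, -(a*(2*c+1)^2), -2*(a*(2*c+1)^2), -c; 0, 1, 2, 0]) hdet
    rwa [key] at this
  -- step 3 : row expansion of V4
  have h3 : SMove ⟨2, (!![4 * (a * (2*c+1) ^ 2), 2*c+1; 2*c+1 + 1, 0]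
        : Matrix (Fin 2) (Fin 2) ℤ)⟩
      ⟨2 + 2, (colExpand (!![4 * (a * (2*c+1) ^ 2), 2*c+1; 2*c+1 + 1, 0])ᵀ
        ![2 * (a * (2*c+1) ^ 2), c+1])ᵀ⟩ :=
    SMove.rowExp _ _
  -- step 4 : V4 is congruent to V
  have h4 : SMove ⟨2, (!![4 * (a * (2*c+1) ^ 2), 2*c+1; 2*c+1 + 1, 0]
        : Matrix (Fin 2) (Fin 2) ℤ)⟩
      ⟨2, (!![a, 2*c+1; 2*c+1 + 1, 0] : Matrix (Fin 2) (Fin 2) ℤ)⟩ := by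
    have hs : !![1, -(a*(2*(2*c+1)-1)); 0, 1] * !![4 * (a * (2*c+1) ^ 2), 2*c+1; 2*c+1 + 1, 0] *
        (!![1, -(a*(2*(2*c+1)-1)); 0, 1])ᵀ = !![a, 2*c+1; 2*c+1 + 1, 0] := by
      rw [shear_congr (4 * (a * (2*c+1) ^ 2)) (2*c+1) (-(a*(2*(2*c+1)-1))),
        show 4 * (a * (2*c+1) ^ 2) + -(a*(2*(2*c+1)-1)) * (2 * (2*c+1) + 1) = a by ring]
    have := SMove.congruence (!![4 * (a * (2*c+1) ^ 2), 2*c+1; 2*c+1 + 1, 0])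
      (!![1, -(a*(2*(2*c+1)-1)); 0, 1]) (Or.inl (shear_det _))
    rwa [hs] at this
  exact Relation.EqvGen.trans _ _ _ (Relation.EqvGen.symm _ _ (Relation.EqvGen.rel _ _ h4))
    (Relation.EqvGen.trans _ _ _ (Relation.EqvGen.rel _ _ h3)
      (Relation.EqvGen.trans _ _ _ (Relation.EqvGen.symm _ _ (Relation.EqvGen.rel _ _ h2))
        (Relation.EqvGen.symm _ _ (Relation.EqvGen.rel _ _ h1))))

/-- The key one-stabilization move, even case: `b = 2c`. -/
lemma four_times_even (a c : ℤ) :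
    SEquivalent !![a, 2*c; 2*c + 1, 0]
      !![a * (2*c) ^ 2, 2*c; 2*c + 1, 0] := by
  -- step 1 : row expansion of W
  have h1 : SMove ⟨2, (!![a * (2*c) ^ 2, 2*c; 2*c + 1, 0] : Matrix (Fin 2) (Fin 2) ℤ)⟩
      ⟨2 + 2, (colExpand (!![a * (2*c) ^ 2, 2*c; 2*c + 1, 0])ᵀ ![-c, 0])ᵀ⟩ :=
    SMove.rowExp _ _
  have hdet : (!![2, -2*(a*(2*c)^2), -4*(a*(2*c)^2), -(2*c+1); 0, -c, -(2*c+1), 0;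
       1, -(a*(2*c)^2), -2*(a*(2*c)^2), -c; 0, 1, 2, 0] : Matrix (Fin 4) (Fin 4) ℤ).det
      = 1 ∨ (!![2, -2*(a*(2*c)^2), -4*(a*(2*c)^2), -(2*c+1); 0, -c, -(2*c+1), 0;
       1, -(a*(2*c)^2), -2*(a*(2*c)^2), -c; 0, 1, 2, 0] : Matrix (Fin 4) (Fin 4) ℤ).det
      = -1 := by
    right
    simp [Matrix.det_succ_row_zero, Fin.sum_univ_succ, Matrix.vecHead, Matrix.vecTail,
      Fin.succAbove, Fin.castSucc, Fin.castAdd, Fin.castLE]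
    ring
  have hK : (!![2, -2*(a*(2*c)^2), -4*(a*(2*c)^2), -(2*c+1); 0, -c, -(2*c+1), 0;
       1, -(a*(2*c)^2), -2*(a*(2*c)^2), -c; 0, 1, 2, 0] : Matrix (Fin 4) (Fin 4) ℤ) *
      (colExpand (!![a * (2*c) ^ 2, 2*c; 2*c + 1, 0])ᵀ ![-c, 0])ᵀ =
      !![-16*a*c^3, 4*c, -2*c, -16*a*c^2; -c - 2*c^2, 0, 0, -1 - 2*c;
         -8*a*c^3, 2*c, -c, -8*a*c^2; 1 + 2*c, 0, 0, 2] := by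
    rw [rowExpand_ex]
    ext i j
    fin_cases i <;> fin_cases j <;>
      simp [Matrix.mul_apply, Fin.sum_univ_four, Matrix.vecHead, Matrix.vecTail] <;> ring
  have key : (!![2, -2*(a*(2*c)^2), -4*(a*(2*c)^2), -(2*c+1); 0, -c, -(2*c+1), 0;
       1, -(a*(2*c)^2), -2*(a*(2*c)^2), -c; 0, 1, 2, 0] : Matrix (Fin 4) (Fin 4) ℤ) *
      (colExpand (!![a * (2*c) ^ 2, 2*c; 2*c + 1, 0])ᵀ ![-c, 0])ᵀ *
      (!![2, -2*(a*(2*c)^2), -4*(a*(2*c)^2), -(2*c+1); 0, -c, -(2*c+1), 0;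
       1, -(a*(2*c)^2), -2*(a*(2*c)^2), -c; 0, 1, 2, 0] : Matrix (Fin 4) (Fin 4) ℤ)ᵀ =
      colExpand !![4 * (a * (2*c) ^ 2), 2*c; 2*c + 1, 0] ![2 * (a * (2*c) ^ 2), c] := by
    rw [hK, colExpand_ex]
    ext i j
    fin_cases i <;> fin_cases j <;>
      simp [Matrix.mul_apply, Fin.sum_univ_four, Matrix.vecHead, Matrix.vecTail,
        Matrix.transpose_apply] <;> ring
  have h2 : SMove ⟨2 + 2, (colExpand (!![a * (2*c) ^ 2, 2*c; 2*c + 1, 0])ᵀ ![-c, 0])ᵀ⟩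
      ⟨2 + 2, colExpand !![4 * (a * (2*c) ^ 2), 2*c; 2*c + 1, 0] ![2 * (a * (2*c) ^ 2), c]⟩ := by
    have := SMove.congruence
      ((colExpand (!![a * (2*c) ^ 2, 2*c; 2*c + 1, 0])ᵀ ![-c, 0])ᵀ)
      (!![2, -2*(a*(2*c)^2), -4*(a*(2*c)^2), -(2*c+1); 0, -c, -(2*c+1), 0;
       1, -(a*(2*c)^2), -2*(a*(2*c)^2), -c; 0, 1, 2, 0]) hdet
    rwa [key] at this
  have h3 : SMove ⟨2, (!![4 * (a * (2*c) ^ 2), 2*c; 2*c + 1, 0] : Matrix (Fin 2) (Fin 2) ℤ)⟩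
      ⟨2 + 2, colExpand !![4 * (a * (2*c) ^ 2), 2*c; 2*c + 1, 0] ![2 * (a * (2*c) ^ 2), c]⟩ :=
    SMove.colExp _ _
  have h4 : SMove ⟨2, (!![4 * (a * (2*c) ^ 2), 2*c; 2*c + 1, 0] : Matrix (Fin 2) (Fin 2) ℤ)⟩
      ⟨2, (!![a, 2*c; 2*c + 1, 0] : Matrix (Fin 2) (Fin 2) ℤ)⟩ := by
    have hs : !![1, -(a*(2*(2*c)-1)); 0, 1] * !![4 * (a * (2*c) ^ 2), 2*c; 2*c + 1, 0] *
        (!![1, -(a*(2*(2*c)-1)); 0, 1])ᵀ = !![a, 2*c; 2*c + 1, 0] := by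
      rw [shear_congr (4 * (a * (2*c) ^ 2)) (2*c) (-(a*(2*(2*c)-1))),
        show 4 * (a * (2*c) ^ 2) + -(a*(2*(2*c)-1)) * (2 * (2*c) + 1) = a by ring]
    have := SMove.congruence (!![4 * (a * (2*c) ^ 2), 2*c; 2*c + 1, 0])
      (!![1, -(a*(2*(2*c)-1)); 0, 1]) (Or.inl (shear_det _))
    rwa [hs] at this
  exact Relation.EqvGen.trans _ _ _ (Relation.EqvGen.symm _ _ (Relation.EqvGen.rel _ _ h4))
    (Relation.EqvGen.trans _ _ _ (Relation.EqvGen.rel _ _ h3)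
      (Relation.EqvGen.trans _ _ _ (Relation.EqvGen.symm _ _ (Relation.EqvGen.rel _ _ h2))
        (Relation.EqvGen.symm _ _ (Relation.EqvGen.rel _ _ h1))))

theorem stmt_3 (a b : ℤ) :
    SEquivalent !![a, b; b + 1, 0] !![a * b ^ 2, b; b + 1, 0] := by
  rcases Int.even_or_odd b with ⟨c, hc⟩ | ⟨c, hc⟩
  · have hb : b = 2*c := by omega
    rw [hb]
    exact four_times_even a c
  · have hb : b = 2*c+1 := by omega
    rw [hb]
    exact four_times_odd a c
end

section
/- For every integer b > 4 with b ≡ 0 (mod 3) or b ≡ 2 (mod 3), there exists an integer a such that the matrices [[a, b],[b+1, 0]] and [[a+1, b],[b+1, 0]] are S-equivalent. -/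
open Matrix

lemma det_fin_four (A : Matrix (Fin 4) (Fin 4) ℤ) :
    A.det =
      A 0 0 * (A 1 1 * (A 2 2 * A 3 3 - A 2 3 * A 3 2) - A 1 2 * (A 2 1 * A 3 3 - A 2 3 * A 3 1)
        + A 1 3 * (A 2 1 * A 3 2 - A 2 2 * A 3 1))
      - A 0 1 * (A 1 0 * (A 2 2 * A 3 3 - A 2 3 * A 3 2) - A 1 2 * (A 2 0 * A 3 3 - A 2 3 * A 3 0)
        + A 1 3 * (A 2 0 * A 3 2 - A 2 2 * A 3 0))
      + A 0 2 * (A 1 0 * (A 2 1 * A 3 3 - A 2 3 * A 3 1) - A 1 1 * (A 2 0 * A 3 3 - A 2 3 * A 3 0)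
        + A 1 3 * (A 2 0 * A 3 1 - A 2 1 * A 3 0))
      - A 0 3 * (A 1 0 * (A 2 1 * A 3 2 - A 2 2 * A 3 1) - A 1 1 * (A 2 0 * A 3 2 - A 2 2 * A 3 0)
        + A 1 2 * (A 2 0 * A 3 1 - A 2 1 * A 3 0)) := by
  rw [Matrix.det_succ_row_zero]
  simp [Fin.sum_univ_succ, Matrix.det_fin_three, Fin.succAbove, Matrix.submatrix_apply,
    - Fin.val_fin_lt]
  ring

lemma colExpand_fin2 (M : Matrix (Fin 2) (Fin 2) ℤ) (u : Fin 2 → ℤ) :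
    colExpand M u =
      !![M 0 0, M 0 1, 0, 0; M 1 0, M 1 1, 0, 0; u 0, u 1, 0, 0; 0, 0, 1, 0] := by
  ext i j
  fin_cases i <;> fin_cases j <;> rfl

lemma sequiv_of_expand (a b : ℤ) (u v : Fin 2 → ℤ) (P : Matrix (Fin 4) (Fin 4) ℤ)
    (hdet : P.det = 1 ∨ P.det = -1)
    (h : P * colExpand !![a, b; b + 1, 0] u * Pᵀ =
        (colExpand (!![a + 1, b; b + 1, 0])ᵀ v)ᵀ) :
    SEquivalent !![a, b; b + 1, 0] !![a + 1, b; b + 1, 0] := by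
  refine Relation.EqvGen.trans _ ⟨4, colExpand !![a, b; b + 1, 0] u⟩ _
    (Relation.EqvGen.rel _ _ (SMove.colExp _ u)) ?_
  refine Relation.EqvGen.trans _ ⟨4, P * colExpand !![a, b; b + 1, 0] u * Pᵀ⟩ _
    (Relation.EqvGen.rel _ _ (SMove.congruence _ P hdet)) ?_
  rw [h]
  exact Relation.EqvGen.symm _ _ (Relation.EqvGen.rel _ _ (SMove.rowExp _ v))

set_option maxHeartbeats 1000000 in
theorem stmt_4 (b : ℤ) (hb : b > 4) (h3 : b % 3 = 0 ∨ b % 3 = 2) :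
    ∃ a : ℤ, SEquivalent !![a, b; b + 1, 0] !![a + 1, b; b + 1, 0] := by
  rcases h3 with h3 | h3
  · -- b = 3 m, a = 4 m + 1
    obtain ⟨m, rfl⟩ : ∃ m : ℤ, b = 3 * m := ⟨b / 3, by omega⟩
    refine ⟨4 * m + 1, ?_⟩
    refine sequiv_of_expand _ _ ![2 * m + 1, 1] ![1, 0]
      !![-1, 1, 3 * m + 1, 2 * m + 2; 0, 3 * m, 0, 3 * m + 1; 0, 1, 0, 1;
         1, 2 * m - 1, -(3 * m), 0] (Or.inr ?_) ?_
    · rw [det_fin_four]; simp [Matrix.vecHead, Matrix.vecTail]; ring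
    · rw [colExpand_fin2, colExpand_fin2]
      ext i j
      fin_cases i <;> fin_cases j <;>
        simp [Matrix.mul_apply, Fin.sum_univ_four, Matrix.vecHead, Matrix.vecTail] <;> first | ring1 | (left; first | ring1 | trivial) | (right; ring1)
  · -- b = 3 m + 2, a = 2 m + 2
    obtain ⟨m, rfl⟩ : ∃ m : ℤ, b = 3 * m + 2 := ⟨b / 3, by omega⟩
    refine ⟨2 * m + 2, ?_⟩
    refine sequiv_of_expand _ _ ![m + 1, 1] ![-1, 0]
      !![-1, 1, 3 * m + 3, m + 2; 0, 3 * m + 2, 0, 3 * m + 3; 0, -1, 0, -1;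
         -1, -m, 3 * m + 2, 0] (Or.inr ?_) ?_
    · rw [det_fin_four]; simp [Matrix.vecHead, Matrix.vecTail]; ring
    · rw [colExpand_fin2, colExpand_fin2]
      ext i j
      fin_cases i <;> fin_cases j <;>
        simp [Matrix.mul_apply, Fin.sum_univ_four, Matrix.vecHead, Matrix.vecTail] <;> first | ring1 | (left; first | ring1 | trivial) | (right; ring1)
end

section
/- Let a, b be integers and let ε ∈ {1, −1}. Let G be the abelian group presented by the matrix [[2a, 2b+1],[2b+1, 0]] and let G' be the abelian group presented by the matrix [[2a+2ε, 2b+1],[2b+1, 0]]. If G and G' are isomorphic, then gcd(2a, 2b+1) = 1 and G is cyclic (isomorphic to ℤ_{(2b+1)²}). -/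
def MatPresentedGroup (r s u v : ℤ) : Type :=
  (ℤ × ℤ) ⧸ AddSubgroup.closure {(r, s), (u, v)}

noncomputable instance (r s u v : ℤ) : AddCommGroup (MatPresentedGroup r s u v) := by
  unfold MatPresentedGroup; infer_instance

private lemma mem_closure_pair' {p q : ℤ × ℤ} (x y : ℤ) :
    x • p + y • q ∈ AddSubgroup.closure {p, q} :=
  add_mem (AddSubgroup.zsmul_mem _ (AddSubgroup.subset_closure (by simp)) x)
    (AddSubgroup.zsmul_mem _ (AddSubgroup.subset_closure (by simp)) y)

/-- Part B: if gcd(2a, m)=1 then the presented group is cyclic of order m². -/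
private lemma cyclic_of_coprime (a m : ℤ) (hm : m ≠ 0) (hg : Int.gcd (2*a) m = 1) :
    Nonempty (((ℤ × ℤ) ⧸ AddSubgroup.closure {((2*a : ℤ), m), ((m : ℤ), 0)}) ≃+
      ZMod (m.natAbs ^ 2)) := by
  set n : ℕ := m.natAbs ^ 2 with hn
  have hnm : (n : ℤ) = m ^ 2 := by
    simp [hn, Int.natAbs_sq]
  set N := AddSubgroup.closure {((2*a : ℤ), m), ((m : ℤ), 0)} with hN
  -- the hom
  set ψ : (ℤ × ℤ) →+ ZMod n := AddMonoidHom.mk'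
      (fun p => ((m * p.1 - 2*a*p.2 : ℤ) : ZMod n))
      (by intro p q; simp only [Prod.fst_add, Prod.snd_add]; push_cast; ring) with hψ
  have hψ_apply : ∀ x y : ℤ, ψ (x, y) = ((m * x - 2*a*y : ℤ) : ZMod n) := fun _ _ => rfl
  have hker : N = ψ.ker := by
    apply le_antisymm
    · rw [hN, AddSubgroup.closure_le]
      intro v hv
      rcases hv with rfl | rfl
      · simp only [SetLike.mem_coe, AddMonoidHom.mem_ker, hψ_apply]
        rw [show m * (2*a) - 2*a*m = 0 by ring]
        simp
      · simp only [SetLike.mem_coe, AddMonoidHom.mem_ker, hψ_apply]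
        rw [ZMod.intCast_zmod_eq_zero_iff_dvd]
        rw [hnm]; ring_nf
        exact Dvd.intro 1 (by ring)
    · rintro ⟨x, y⟩ hv
      rw [AddMonoidHom.mem_ker, hψ_apply, ZMod.intCast_zmod_eq_zero_iff_dvd, hnm] at hv
      obtain ⟨k, hk⟩ := hv
      -- m ∣ y
      have hco : IsCoprime m (2*a) := by
        rw [Int.isCoprime_iff_gcd_eq_one, Int.gcd_comm]; exact hg
      have hmy : m ∣ y := by
        have : m ∣ (2*a) * y := ⟨x - m*k, by linarith [hk]⟩
        exact hco.dvd_of_dvd_mul_left this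
      obtain ⟨y', rfl⟩ := hmy
      have hx : x = 2*a*y' + m*k := by
        have h2 : m * x = m * (2*a*y' + m*k) := by ring_nf; ring_nf at hk; linarith [hk]
        exact mul_left_cancel₀ hm h2
      have : (x, m*y') = y' • ((2*a : ℤ), m) + k • ((m : ℤ), 0) := by
        simp [Prod.ext_iff, hx]; constructor <;> ring
      rw [this]
      exact mem_closure_pair' y' k
  -- surjectivity
  have hsurj : Function.Surjective ψ := by
    intro z
    obtain ⟨k, rfl⟩ := ZMod.intCast_surjective z
    have hbez : (Int.gcd (2*a) m : ℤ) = 2*a * Int.gcdA (2*a) m + m * Int.gcdB (2*a) m :=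
      Int.gcd_eq_gcd_ab (2*a) m
    rw [hg] at hbez
    refine ⟨(Int.gcdB (2*a) m * k, -(Int.gcdA (2*a) m * k)), ?_⟩
    rw [hψ_apply]
    congr 1
    push_cast at hbez
    linear_combination -k * hbez
  exact ⟨(QuotientAddGroup.quotientAddEquivOfEq hker).trans
    (QuotientAddGroup.quotientKerEquivOfSurjective ψ hsurj)⟩

theorem stmt_6 (a b ε : ℤ) (hε : ε = 1 ∨ ε = -1)
    (h : Nonempty (MatPresentedGroup (2 * a) (2 * b + 1) (2 * b + 1) 0 ≃+
        MatPresentedGroup (2 * a + 2 * ε) (2 * b + 1) (2 * b + 1) 0)) :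
    Int.gcd (2 * a) (2 * b + 1) = 1 ∧
    Nonempty (MatPresentedGroup (2 * a) (2 * b + 1) (2 * b + 1) 0 ≃+
      ZMod ((2 * b + 1).natAbs ^ 2)) := by
  obtain ⟨e⟩ := h
  set m : ℤ := 2 * b + 1 with hm
  have hm0 : m ≠ 0 := by omega
  set d : ℕ := Int.gcd (2 * a) m with hd
  have hd0 : d ≠ 0 := by
    simp [hd, Int.gcd_eq_zero_iff]
    omega
  haveI : NeZero d := ⟨hd0⟩
  have hd2a : (d : ℤ) ∣ 2 * a := Int.gcd_dvd_left (2 * a) m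
  have hdm : (d : ℤ) ∣ m := Int.gcd_dvd_right (2 * a) m
  -- Step A: gcd = 1
  have hgcd : d = 1 := by
    set N : AddSubgroup (ℤ × ℤ) := AddSubgroup.closure {((2*a : ℤ), m), ((m : ℤ), 0)} with hN
    set N' : AddSubgroup (ℤ × ℤ) :=
      AddSubgroup.closure {((2*a + 2*ε : ℤ), m), ((m : ℤ), 0)} with hN'
    set π : (ℤ × ℤ) →+ ZMod d × ZMod d :=
      AddMonoidHom.prodMap (Int.castAddHom (ZMod d)) (Int.castAddHom (ZMod d)) with hπ
    have hπ_apply : ∀ x y : ℤ, π (x, y) = ((x : ZMod d), (y : ZMod d)) := fun _ _ => rfl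
    have hNker : ∀ v ∈ N, π v = 0 := by
      intro v hv
      refine AddSubgroup.closure_induction ?_ (by simp) (by intro x y _ _ hx hy; simp [hx, hy])
        (by intro x _ hx; simp [hx]) hv
      intro v hv
      rcases hv with rfl | rfl <;>
        rw [hπ_apply, Prod.mk_eq_zero] <;>
          refine ⟨?_, ?_⟩ <;> rw [ZMod.intCast_zmod_eq_zero_iff_dvd] <;>
            first
              | exact hd2a
              | exact hdm
              | exact hdvdgen
              | exact dvd_zero _
    have hπsurj : Function.Surjective π := by
      rintro ⟨z, w⟩
      obtain ⟨x, rfl⟩ := ZMod.intCast_surjective z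
      obtain ⟨y, rfl⟩ := ZMod.intCast_surjective w
      exact ⟨(x, y), rfl⟩
    set f : ((ℤ × ℤ) ⧸ N) →+ ZMod d × ZMod d := QuotientAddGroup.lift N π hNker with hf
    have hfsurj : Function.Surjective f := by
      intro z; obtain ⟨v, rfl⟩ := hπsurj z; exact ⟨QuotientAddGroup.mk v, rfl⟩
    -- compose with the iso and the quotient map for N'
    set e' : ((ℤ × ℤ) ⧸ N') ≃+ ((ℤ × ℤ) ⧸ N) :=
      (e : MatPresentedGroup (2*a) m m 0 ≃+ MatPresentedGroup (2*a + 2*ε) m m 0).symm with he'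
    set φ : (ℤ × ℤ) →+ ZMod d × ZMod d :=
      f.comp (e'.toAddMonoidHom.comp (QuotientAddGroup.mk' N')) with hφ
    have hφsurj : Function.Surjective φ := by
      apply hfsurj.comp
      exact e'.surjective.comp (QuotientAddGroup.mk'_surjective N')
    have hφzero : ∀ u v : ℤ, (d:ℤ) ∣ u → (d:ℤ) ∣ v → φ (u, v) = 0 := by
      rintro _ _ ⟨u', rfl⟩ ⟨v', rfl⟩
      have : ((d:ℤ) * u', (d:ℤ) * v') = (d:ℤ) • ((u' : ℤ), (v' : ℤ)) := by
        simp [Prod.ext_iff]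
      rw [this, map_zsmul, natCast_zsmul]
      simp [Prod.ext_iff, nsmul_eq_mul, ZMod.natCast_self]
    -- reduce φ through ZMod d × ZMod d
    set g : ZMod d × ZMod d → ZMod d × ZMod d :=
      fun z => φ ((z.1.val : ℤ), (z.2.val : ℤ)) with hg
    have hkey : ∀ x y : ℤ, φ (x, y) = g ((x : ZMod d), (y : ZMod d)) := by
      intro x y
      have h1 : (d:ℤ) ∣ x - (((x : ZMod d)).val : ℤ) := by
        rw [← ZMod.intCast_zmod_eq_zero_iff_dvd]
        push_cast
        simp [ZMod.natCast_val, ZMod.intCast_cast]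
      have h2 : (d:ℤ) ∣ y - (((y : ZMod d)).val : ℤ) := by
        rw [← ZMod.intCast_zmod_eq_zero_iff_dvd]
        push_cast
        simp [ZMod.natCast_val, ZMod.intCast_cast]
      have := hφzero _ _ h1 h2
      have hsplit : (x, y) = ((x - ((x : ZMod d)).val : ℤ), (y - ((y : ZMod d)).val : ℤ))
          + ((((x : ZMod d)).val : ℤ), (((y : ZMod d)).val : ℤ)) := by
        simp [Prod.ext_iff]
      rw [hsplit, map_add, this, zero_add]
    have hgsurj : Function.Surjective g := by
      intro z
      obtain ⟨⟨x, y⟩, rfl⟩ := hφsurj z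
      exact ⟨((x : ZMod d), (y : ZMod d)), (hkey x y).symm⟩
    have hginj : Function.Injective g := Finite.injective_iff_surjective.mpr hgsurj
    -- φ kills the generator (2a+2ε, m)
    have hgen : φ (2*a + 2*ε, m) = 0 := by
      rw [hφ]
      simp only [AddMonoidHom.comp_apply]
      have : (QuotientAddGroup.mk' N') (2*a + 2*ε, m) = 0 := by
        rw [QuotientAddGroup.mk'_apply, QuotientAddGroup.eq_zero_iff]
        have := mem_closure_pair' (p := ((2*a + 2*ε : ℤ), m)) (q := ((m:ℤ), 0)) 1 0
        simpa using this
      rw [this]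
      simp
    have h00 : g (((2*a + 2*ε : ℤ) : ZMod d), ((m : ℤ) : ZMod d)) = g (0, 0) := by
      rw [← hkey]
      rw [hgen]
      have : g (0, 0) = φ (0, 0) := by simp [hg, ZMod.val_zero]
      rw [this]
      exact (map_zero φ).symm
    have := hginj h00
    have hdvd : (d:ℤ) ∣ 2*a + 2*ε := by
      have h1 : ((2*a + 2*ε : ℤ) : ZMod d) = 0 := by
        have := congrArg Prod.fst this
        simpa using this
      rwa [ZMod.intCast_zmod_eq_zero_iff_dvd] at h1
    -- conclude d = 1
    have h2ε : (d:ℤ) ∣ 2*ε := by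
      have := dvd_sub hdvd hd2a
      simpa using this
    have h2 : (d:ℤ) ∣ 2 := by
      rcases hε with rfl | rfl
      · simpa using h2ε
      · have : (d:ℤ) ∣ -2 := by simpa using h2ε
        exact (dvd_neg.mp this)
    have h1 : (d:ℤ) ∣ 1 := by
      have h3 : (d:ℤ) ∣ (2*b + 1) - b * 2 := dvd_sub (by rwa [← hm]) (Dvd.dvd.mul_left h2 b)
      rwa [show (2*b+1 : ℤ) - b*2 = 1 by ring] at h3
    have := Int.eq_one_of_dvd_one (by positivity) h1
    exact_mod_cast this
  refine ⟨hgcd, ?_⟩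
  exact cyclic_of_coprime a m hm0 hgcd
end

section
/- Let a, b, d be integers, set c = b+1, and let ε ∈ {1, −1}. Consider the Laurent polynomials p(t) = a·d·(1−t)² − (b−c·t)·(c−b·t) and q(t) = (a−ε)·d·(1−t)² − (b−c·t)·(c−b·t) in ℤ[t, t⁻¹]. If p ≐ q, i.e. q = ±tᵏ·p for some integer k, then d = 0. -/
open LaurentPolynomial

noncomputable def phiNeg : LaurentPolynomial ℤ →ₐ[ℤ] ℤ :=
  AddMonoidAlgebra.lift ℤ ℤ ℤ ((Units.coeHom ℤ).comp (zpowersHom ℤˣ (-1)))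

noncomputable def phiOne : LaurentPolynomial ℤ →ₐ[ℤ] ℤ :=
  AddMonoidAlgebra.lift ℤ ℤ ℤ 1

lemma phiNeg_C (a : ℤ) : phiNeg (C a) = a := by
  rw [← single_eq_C]
  simp [phiNeg, AddMonoidAlgebra.lift_single]

lemma phiNeg_T (n : ℤ) : phiNeg (T n) = (((-1 : ℤˣ) ^ n : ℤˣ) : ℤ) := by
  have : (T n : LaurentPolynomial ℤ) = AddMonoidAlgebra.single n 1 := rfl
  rw [this, phiNeg, AddMonoidAlgebra.lift_single, one_smul, MonoidHom.comp_apply,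
    zpowersHom_apply, Units.coeHom_apply]
  rfl

lemma phiOne_C (a : ℤ) : phiOne (C a) = a := by
  rw [← single_eq_C]
  simp [phiOne, AddMonoidAlgebra.lift_single]

lemma phiOne_T (n : ℤ) : phiOne (T n) = 1 := by
  have : (T n : LaurentPolynomial ℤ) = AddMonoidAlgebra.single n 1 := rfl
  rw [this, phiOne, AddMonoidAlgebra.lift_single, one_smul, MonoidHom.one_apply]

theorem stmt_9 (a b d ε : ℤ) (hε : ε = 1 ∨ ε = -1) (c : ℤ) (hc : c = b + 1)
    (p q : LaurentPolynomial ℤ)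
    (hp : p = C (a * d) * (1 - T 1) ^ 2 - (C b - C c * T 1) * (C c - C b * T 1))
    (hq : q = C ((a - ε) * d) * (1 - T 1) ^ 2 - (C b - C c * T 1) * (C c - C b * T 1))
    (h : ∃ k : ℤ, q = T k * p ∨ q = -(T k * p)) :
    d = 0 := by
  obtain ⟨k, hk⟩ := h
  have hp1 : phiOne p = -(b - c) * (c - b) := by
    rw [hp]; push_cast [map_sub, map_mul, map_pow, map_one, phiOne_C, phiOne_T]; ring
  have hq1 : phiOne q = -(b - c) * (c - b) := by
    rw [hq]; push_cast [map_sub, map_mul, map_pow, map_one, phiOne_C, phiOne_T]; ring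
  have hpn : phiNeg p = 4 * (a * d) - (b + c) * (c + b) := by
    rw [hp]; push_cast [map_sub, map_mul, map_pow, map_one, phiNeg_C, phiNeg_T]
    simp; ring
  have hqn : phiNeg q = 4 * ((a - ε) * d) - (b + c) * (c + b) := by
    rw [hq]; push_cast [map_sub, map_mul, map_pow, map_one, phiNeg_C, phiNeg_T]
    simp; ring
  have hsq : (b - c) * (c - b) = -1 := by subst hc; ring
  rcases hk with hk | hk
  · -- q = T k * p
    have h2 : phiNeg q = phiNeg (T k) * phiNeg p := by rw [hk, map_mul]
    rw [phiNeg_T, hpn, hqn] at h2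
    rcases Int.units_eq_one_or ((-1 : ℤˣ) ^ k) with hu | hu <;> rw [hu] at h2
    · -- same sign
      have h3 : 4 * (ε * d) = 0 := by push_cast at h2; linarith
      have h4 : ε * d = 0 := by omega
      rcases hε with rfl | rfl <;> omega
    · -- opposite sign: parity contradiction
      push_cast at h2
      have h3 : 4 * ((2 * a - ε) * d) = 2 * (4 * (b * b + b) + 1) := by
        have h5 : (b + c) * (c + b) = 4 * (b * b + b) + 1 := by subst hc; ring
        nlinarith [h2, h5]
      set m := (2 * a - ε) * d
      set n := b * b + b
      omega
  · -- q = -(T k * p): evaluate at 1 gives contradiction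
    have h2 : phiOne q = -(phiOne (T k) * phiOne p) := by rw [hk, map_neg, map_mul]
    rw [phiOne_T, hp1, hq1, one_mul] at h2
    have : (-1 : ℤ) = 1 := by nlinarith [hsq, h2]
    omega
end

section
/- Let n be an integer. If there exist an integer b and a unit u = ±tᵏ of ℤ[t, t⁻¹] such that −n·(t²+1) + (2n+1)·t = u·( b·(b+1)·(t²+1) − (b² + (b+1)²)·t ) in ℤ[t, t⁻¹], then n is even. -/
open LaurentPolynomial

noncomputable def φ : LaurentPolynomial ℤ →ₐ[ℤ] ℤ :=
  AddMonoidAlgebra.lift ℤ ℤ ℤ ((Units.coeHom ℤ).comp (zpowersHom ℤˣ (-1)))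

lemma φ_T (k : ℤ) : φ (T k) = ((-1 : ℤˣ) ^ k : ℤˣ) := by
  rw [φ, T, AddMonoidAlgebra.lift_single, one_smul]
  rfl

lemma φ_C (a : ℤ) : φ (C a) = a := by
  simp [φ, LaurentPolynomial.C, AddMonoidAlgebra.lift_single]

theorem stmt_10 (n : ℤ)
    (h : ∃ (b : ℤ) (u : (LaurentPolynomial ℤ)ˣ) (k : ℤ),
      ((u : LaurentPolynomial ℤ) = T k ∨ (u : LaurentPolynomial ℤ) = -(T k)) ∧
      (C (-n) * (T 2 + 1) + C (2 * n + 1) * T 1 : LaurentPolynomial ℤ) =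
        (u : LaurentPolynomial ℤ) *
          (C (b * (b + 1)) * (T 2 + 1) - C (b ^ 2 + (b + 1) ^ 2) * T 1)) :
    Even n := by
  obtain ⟨b, u, k, hu, heq⟩ := h
  have H := congrArg φ heq
  have h2 : φ (T 2) = 1 := by rw [φ_T]; norm_num [zpow_two]
  have h1 : φ (T 1) = -1 := by rw [φ_T]; norm_num [zpow_two]
  have hφu : φ (u : LaurentPolynomial ℤ) = ((-1 : ℤˣ) ^ k : ℤˣ) ∨
      φ (u : LaurentPolynomial ℤ) = -(((-1 : ℤˣ) ^ k : ℤˣ) : ℤ) := by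
    rcases hu with hu | hu <;> rw [hu] <;> simp [φ_T]
  simp only [map_add, map_mul, map_sub, map_one, φ_C, h2, h1] at H
  have he : (((-1 : ℤˣ) ^ k : ℤˣ) : ℤ) = 1 ∨ (((-1 : ℤˣ) ^ k : ℤˣ) : ℤ) = -1 := by
    rcases Int.units_eq_one_or ((-1 : ℤˣ) ^ k) with h' | h' <;> rw [h'] <;> simp
  have key : -n * (1 + 1) + (2 * n + 1) * (-1) =
      φ (u : LaurentPolynomial ℤ) * (b * (b + 1) * (1 + 1) - (b ^ 2 + (b + 1) ^ 2) * (-1)) := H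
  have hsq : b * (b + 1) * (1 + 1) - (b ^ 2 + (b + 1) ^ 2) * (-1) = 4 * (b * b + b) + 1 := by
    ring
  set X := b * b + b with hX
  rw [hsq] at key
  have hXeven : Even X := by
    rw [hX, show b * b + b = b * (b + 1) from by ring]
    exact Int.even_mul_succ_self b
  obtain ⟨r, hr⟩ := hXeven
  rcases hφu with h' | h' <;> rcases he with e | e <;> rw [h', e] at key <;>
    exact ⟨r, by omega⟩
end
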